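/- arXiv:1203.5859 — 3 statements merged into one kernel-verified Lean document; each statement's English description precedes it below -/
import Mathlib

section
/- Let σ be a measure on ℝ with all moments finite and let s_k = ∫_ℝ u^k dσ(u) for all k ≥ 0. Let (ℓ_k)_{k≥0} ⊆ ℕ₀ be such that for every u ∈ ℝ the sequence (u^{ℓ_k})_{k≥0} is positive, and assume u ↦ u^{k+ℓ_k} is σ-integrable for all k. Then the subsequence (s̃_k)_{k≥0} defined by s̃_k = s_{k+ℓ_k} is a positive sequence. -/
open MeasureTheory

/-- A real sequence `s` is positive if all its Hankel quadratic forms are nonnegative. -/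
def IsPosSeq (s : ℕ → ℝ) : Prop :=
  ∀ (m : ℕ) (x : ℕ → ℝ),
    0 ≤ ∑ i ∈ Finset.range (m + 1), ∑ j ∈ Finset.range (m + 1), x i * x j * s (i + j)

/-- If `s` is the moment sequence of a measure `σ` on `ℝ` and `(ℓ_k) ⊆ ℕ₀` is such that
for every `u ∈ ℝ` the sequence `(u^{ℓ_k})` is positive, then the subsequence
`s̃_k = s_{k + ℓ_k}` is positive. -/
theorem subsequence_isPosSeq_of_power_posSeq (σ : Measure ℝ) (s : ℕ → ℝ)
    (hint : ∀ k : ℕ, Integrable (fun u : ℝ => u ^ k) σ)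
    (hs : ∀ k : ℕ, s k = ∫ u, u ^ k ∂σ)
    (ℓ : ℕ → ℕ)
    (hℓ : ∀ u : ℝ, IsPosSeq fun k => u ^ ℓ k)
    (hint' : ∀ k : ℕ, Integrable (fun u : ℝ => u ^ (k + ℓ k)) σ) :
    IsPosSeq fun k => s (k + ℓ k) := by
  intro m x
  have heq : ∑ i ∈ Finset.range (m + 1), ∑ j ∈ Finset.range (m + 1),
      x i * x j * s ((i + j) + ℓ (i + j))
      = ∫ u, ∑ i ∈ Finset.range (m + 1), ∑ j ∈ Finset.range (m + 1),
          x i * x j * u ^ ((i + j) + ℓ (i + j)) ∂σ := by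
    rw [integral_finset_sum _ (fun i _ => integrable_finset_sum _
      (fun j _ => ((hint' (i + j)).const_mul (x i * x j))))]
    refine Finset.sum_congr rfl fun i _ => ?_
    rw [integral_finset_sum _ (fun j _ => ((hint' (i + j)).const_mul (x i * x j)))]
    exact Finset.sum_congr rfl fun j _ => by rw [hs, integral_const_mul]
  rw [heq]
  refine integral_nonneg fun u => ?_
  have h := hℓ u m (fun i => x i * u ^ i)
  simp only at h ⊢
  show (0:ℝ) ≤ _
  convert h using 1
  refine Finset.sum_congr rfl fun i _ => Finset.sum_congr rfl fun j _ => ?_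
  rw [pow_add, pow_add]
  ring
end

section
/- Let (ℓ_k)_{k≥0} ⊆ ℕ₀ be such that for every u ∈ ℝ the sequence (u^{ℓ_k})_{k≥0} is positive. Then: (1) ℓ_i is even for every even index i; and (2) for every odd index i ≥ 1, 2·ℓ_i = ℓ_{i−1} + ℓ_{i+1}. -/
lemma single_isPos (f : ℕ → ℝ) (hf : IsPosSeq f) (n : ℕ) : 0 ≤ f (n + n) := by
  have h := hf n (fun k => if k = n then 1 else 0)
  have key : (∑ i ∈ Finset.range (n+1), ∑ j ∈ Finset.range (n+1),
      (if i = n then (1:ℝ) else 0) * (if j = n then (1:ℝ) else 0) * f (i + j)) = f (n + n) := by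
    rw [Finset.sum_eq_single_of_mem n (Finset.self_mem_range_succ n)]
    · rw [Finset.sum_eq_single_of_mem n (Finset.self_mem_range_succ n)]
      · simp
      · intro j _ hj; simp [hj]
    · intro i _ hi
      apply Finset.sum_eq_zero
      intro j _; simp [hi]
  rwa [key] at h

lemma quad_isPos (f : ℕ → ℝ) (hf : IsPosSeq f) (n : ℕ) (s t : ℝ) :
    0 ≤ s * s * f (n + n) + 2 * (s * t * f (n + n + 1)) + t * t * f (n + n + 2) := by
  set x : ℕ → ℝ := fun k => if k = n then s else if k = n + 1 then t else 0 with hx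
  have h := hf (n + 1) x
  have hsub : ({n, n+1} : Finset ℕ) ⊆ Finset.range (n + 1 + 1) := by
    intro k hk
    simp only [Finset.mem_insert, Finset.mem_singleton] at hk
    rcases hk with rfl | rfl <;> exact Finset.mem_range.mpr (by omega)
  have hzero : ∀ i ∈ Finset.range (n + 1 + 1), i ∉ ({n, n+1} : Finset ℕ) → x i = 0 := by
    intro i _ hi
    simp only [Finset.mem_insert, Finset.mem_singleton, not_or] at hi
    simp [hx, hi.1, hi.2]
  have key : (∑ i ∈ Finset.range (n+1+1), ∑ j ∈ Finset.range (n+1+1), x i * x j * f (i + j))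
      = ∑ i ∈ ({n, n+1} : Finset ℕ), ∑ j ∈ ({n, n+1} : Finset ℕ), x i * x j * f (i + j) := by
    rw [← Finset.sum_subset hsub]
    · apply Finset.sum_congr rfl
      intro i _
      rw [← Finset.sum_subset hsub]
      intro j hj hj'
      rw [hzero j hj hj']; ring
    · intro i hi hi'
      apply Finset.sum_eq_zero
      intro j _
      rw [hzero i hi hi']; ring
  rw [key] at h
  have hne : n ≠ n + 1 := by omega
  have hne' : n + 1 ≠ n := by omega
  rw [Finset.sum_pair hne, Finset.sum_pair hne, Finset.sum_pair hne] at h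
  have hxn : x n = s := by simp [hx]
  have hxn1 : x (n+1) = t := by simp [hx, hne']
  rw [hxn, hxn1] at h
  have e : n + 1 + (n + 1) = n + n + 2 := by omega
  have e2 : n + (n + 1) = n + n + 1 := by omega
  have e3 : n + 1 + n = n + n + 1 := by omega
  rw [e, e2, e3] at h
  linarith

/-- If `(ℓ_k) ⊆ ℕ₀` is such that for every `u ∈ ℝ` the sequence `(u^{ℓ_k})` is positive,
then (1) `ℓ_i` is even for every even index `i`, and (2) for every odd index `i`,
`2 ℓ_i = ℓ_{i−1} + ℓ_{i+1}`. -/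
theorem exponent_sequence_even_and_arithmetic (ℓ : ℕ → ℕ)
    (hℓ : ∀ u : ℝ, IsPosSeq fun k => u ^ ℓ k) :
    (∀ i : ℕ, Even i → Even (ℓ i)) ∧
      (∀ i : ℕ, 1 ≤ i → Odd i → 2 * ℓ i = ℓ (i - 1) + ℓ (i + 1)) := by
  constructor
  · intro i hi
    obtain ⟨n, rfl⟩ := hi
    have h := single_isPos _ (hℓ (-1)) n
    rcases Nat.even_or_odd (ℓ (n + n)) with he | ho
    · exact he
    · rw [ho.neg_one_pow] at h; linarith
  · intro i hi hodd
    obtain ⟨n, rfl⟩ := hodd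
    have key : ∀ u : ℝ, 0 < u →
        u ^ (2 * ℓ (2*n+1)) ≤ u ^ (ℓ (2*n) + ℓ (2*n+2)) := by
      intro u hu
      have hq := quad_isPos _ (hℓ u) n (-(u ^ ℓ (n+n+1))) (u ^ ℓ (n+n))
      have hA : (0:ℝ) < u ^ ℓ (n+n) := pow_pos hu _
      have h2 : 0 ≤ u ^ ℓ (n+n) * u ^ ℓ (n+n+2) - u ^ ℓ (n+n+1) * u ^ ℓ (n+n+1) := by
        nlinarith [hq, hA]
      rw [show n + n = 2*n from by omega] at h2
      rw [two_mul, pow_add, pow_add]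
      linarith
    have h1 := key 2 (by norm_num)
    have h2 := key (1/2) (by norm_num)
    have le1 : 2 * ℓ (2*n+1) ≤ ℓ (2*n) + ℓ (2*n+2) :=
      (pow_le_pow_iff_right₀ (by norm_num : (1:ℝ) < 2)).mp h1
    have le2 : ℓ (2*n) + ℓ (2*n+2) ≤ 2 * ℓ (2*n+1) := by
      rw [div_pow, div_pow, one_pow, one_pow, div_le_div_iff₀ (by positivity) (by positivity),
        one_mul, one_mul] at h2
      exact (pow_le_pow_iff_right₀ (by norm_num : (1:ℝ) < 2)).mp h2
    have e : 2*n+1-1 = 2*n := by omega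
    have e' : 2*n+1+1 = 2*n+2 := by omega
    rw [e, e']
    omega
end

section
/- Let (ℓ_k)_{k≥0} ⊆ ℕ₀. The following are equivalent: (1) for every positive real sequence (s_k)_{k≥0}, the subsequence (s̃_k)_{k≥0} given by s̃_k = s_{k+ℓ_k} is positive; (2) there exist d ∈ ℕ₀ and an even natural number ℓ₀ such that ℓ_k = k·d + ℓ₀ for all k ≥ 0. -/
/-- Key extraction lemma: positivity passes to forms along any reindexing map `φ`. -/
lemma extract_aux (s : ℕ → ℝ) (hs : IsPosSeq s) (x : ℕ → ℝ) (φ : ℕ → ℕ) (m M : ℕ)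
    (hφ : ∀ i ≤ m, φ i ≤ M) :
    0 ≤ ∑ i ∈ Finset.range (m + 1), ∑ j ∈ Finset.range (m + 1),
        x i * x j * s (φ i + φ j) := by
  set y : ℕ → ℝ := fun n => ∑ i ∈ Finset.range (m + 1), if φ i = n then x i else 0 with hy
  have key : ∀ g : ℕ → ℝ, ∑ n ∈ Finset.range (M + 1), y n * g n
      = ∑ i ∈ Finset.range (m + 1), x i * g (φ i) := by
    intro g
    simp only [hy, Finset.sum_mul, ite_mul, zero_mul]
    rw [Finset.sum_comm]
    refine Finset.sum_congr rfl fun i hi => ?_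
    rw [Finset.sum_ite_eq (Finset.range (M + 1)) (φ i) (fun n => x i * g n)]
    simp [Nat.lt_succ_iff.mpr (hφ i (Nat.lt_succ_iff.mp (Finset.mem_range.mp hi)))]
  have h0 := hs M y
  have hEq : ∑ n ∈ Finset.range (M + 1), ∑ n' ∈ Finset.range (M + 1), y n * y n' * s (n + n')
      = ∑ i ∈ Finset.range (m + 1), ∑ j ∈ Finset.range (m + 1), x i * x j * s (φ i + φ j) := by
    have step1 : ∀ n, ∑ n' ∈ Finset.range (M + 1), y n * y n' * s (n + n')
        = y n * ∑ j ∈ Finset.range (m + 1), x j * s (n + φ j) := by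
      intro n
      rw [← key (fun n' => s (n + n')), Finset.mul_sum]
      exact Finset.sum_congr rfl fun n' _ => by ring
    calc ∑ n ∈ Finset.range (M + 1), ∑ n' ∈ Finset.range (M + 1), y n * y n' * s (n + n')
        = ∑ n ∈ Finset.range (M + 1),
            y n * ∑ j ∈ Finset.range (m + 1), x j * s (n + φ j) := by
          exact Finset.sum_congr rfl fun n _ => step1 n
      _ = ∑ i ∈ Finset.range (m + 1),
            x i * ∑ j ∈ Finset.range (m + 1), x j * s (φ i + φ j) :=
          key (fun n => ∑ j ∈ Finset.range (m + 1), x j * s (n + φ j))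
      _ = ∑ i ∈ Finset.range (m + 1), ∑ j ∈ Finset.range (m + 1), x i * x j * s (φ i + φ j) := by
          refine Finset.sum_congr rfl fun i _ => ?_
          rw [Finset.mul_sum]
          exact Finset.sum_congr rfl fun j _ => by ring
  rw [← hEq]; exact h0

/-- Pure power sequences are positive. -/
lemma isPosSeq_pow (t : ℝ) : IsPosSeq (fun k => t ^ k) := by
  intro m x
  have hEq : ∑ i ∈ Finset.range (m + 1), ∑ j ∈ Finset.range (m + 1), x i * x j * t ^ (i + j)
      = (∑ i ∈ Finset.range (m + 1), x i * t ^ i) ^ 2 := by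
    rw [sq, Finset.sum_mul_sum]
    refine Finset.sum_congr rfl fun i _ => Finset.sum_congr rfl fun j _ => ?_
    rw [pow_add]; ring
  simpa [hEq] using sq_nonneg (∑ i ∈ Finset.range (m + 1), x i * t ^ i)

/-- The 2×2 minor inequality for positive sequences. -/
lemma hankel_two (s : ℕ → ℝ) (hs : IsPosSeq s) (i j : ℕ) :
    s (i + j) ^ 2 ≤ s (2 * i) * s (2 * j) := by
  have h4 : ∀ α : ℝ, 0 ≤ s (2 * i) * (α * α) + (2 * s (i + j)) * α + s (2 * j) := by
    intro α
    have h := extract_aux s hs (fun n => if n = 0 then α else 1)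
      (fun n => if n = 0 then i else j) 1 (i + j)
      (by intro p hp; interval_cases p <;> simp)
    simp only [Finset.sum_range_succ, Finset.sum_range_zero] at h
    norm_num at h
    have e1 : i + i = 2 * i := by ring
    have e2 : j + j = 2 * j := by ring
    have e3 : j + i = i + j := by ring
    rw [e1, e2, e3] at h
    nlinarith [h]
  have hd := discrim_le_zero h4
  rw [discrim] at hd
  nlinarith [hd]

/-- A subsequence extraction pattern `(ℓ_k) ⊆ ℕ₀` sends every positive sequence `s` to a
positive subsequence `s̃_k = s_{k + ℓ_k}` if and only if `ℓ_k = k d + ℓ₀` for some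
`d ∈ ℕ₀` and some even `ℓ₀ ∈ ℕ₀`. Equivalently, this characterizes completability of the
corresponding partial Hankel matrices. -/
theorem subsequence_posSeq_iff_arithmetic (ℓ : ℕ → ℕ) :
    (∀ s : ℕ → ℝ, IsPosSeq s → IsPosSeq fun k => s (k + ℓ k)) ↔
      ∃ d ℓ₀ : ℕ, Even ℓ₀ ∧ ∀ k : ℕ, ℓ k = k * d + ℓ₀ := by
  constructor
  · intro h
    -- parity of ℓ 0
    have hpar : Even (ℓ 0) := by
      have h1 := h (fun k => (-1 : ℝ) ^ k) (isPosSeq_pow _) 0 (fun _ => 1)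
      simp only [Finset.sum_range_succ, Finset.sum_range_zero] at h1
      norm_num at h1
      by_contra hodd
      rw [Nat.not_even_iff_odd] at hodd
      rw [hodd.neg_one_pow] at h1; linarith
    -- key equality from powers of 2 and 1/2
    have key : ∀ i j : ℕ, 2 * ((i + j) + ℓ (i + j)) = (2 * i + ℓ (2 * i)) + (2 * j + ℓ (2 * j)) := by
      intro i j
      have hgen : ∀ t : ℝ, 0 < t →
          t ^ (2 * ((i + j) + ℓ (i + j))) ≤ t ^ ((2 * i + ℓ (2 * i)) + (2 * j + ℓ (2 * j))) := by
        intro t ht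
        have hb := hankel_two (fun k => t ^ (k + ℓ k)) (h (fun k => t ^ k) (isPosSeq_pow t)) i j
        calc t ^ (2 * ((i + j) + ℓ (i + j))) = (t ^ ((i + j) + ℓ (i + j))) ^ 2 := by
              rw [← pow_mul, Nat.mul_comm]
          _ ≤ t ^ (2 * i + ℓ (2 * i)) * t ^ (2 * j + ℓ (2 * j)) := hb
          _ = t ^ ((2 * i + ℓ (2 * i)) + (2 * j + ℓ (2 * j))) := (pow_add t _ _).symm
      have h2 := hgen 2 (by norm_num)
      have hhalf := hgen (1 / 2) (by norm_num)
      have hle : 2 * ((i + j) + ℓ (i + j)) ≤ (2 * i + ℓ (2 * i)) + (2 * j + ℓ (2 * j)) :=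
        (pow_le_pow_iff_right₀ (by norm_num : (1 : ℝ) < 2)).mp h2
      have hge : (2 * i + ℓ (2 * i)) + (2 * j + ℓ (2 * j)) ≤ 2 * ((i + j) + ℓ (i + j)) := by
        by_contra hc
        push_neg at hc
        have := pow_lt_pow_right_of_lt_one₀ (by norm_num : (0 : ℝ) < 1 / 2) (by norm_num) hc
        linarith
      omega
    -- Cauchy equation
    have cauchy : ∀ i j : ℕ, ℓ (i + j) + ℓ 0 = ℓ i + ℓ j := by
      intro i j
      have k1 := key i j
      have k2 := key 0 i
      have k3 := key 0 j
      simp only [Nat.zero_add, Nat.mul_zero, Nat.add_zero] at k2 k3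
      omega
    -- arithmetic form
    have arith : ∀ k : ℕ, ℓ k + k * ℓ 0 = ℓ 0 + k * ℓ 1 := by
      intro k
      induction k with
      | zero => simp
      | succ n ih =>
        have := cauchy n 1
        have e1 : (n + 1) * ℓ 0 = n * ℓ 0 + ℓ 0 := by ring
        have e2 : (n + 1) * ℓ 1 = n * ℓ 1 + ℓ 1 := by ring
        rw [e1, e2]
        omega
    have hmono : ℓ 0 ≤ ℓ 1 := by
      by_contra hc
      push_neg at hc
      have h1 := arith (ℓ 0 + 1)
      have h2 : (ℓ 0 + 1) * ℓ 1 + (ℓ 0 + 1) ≤ (ℓ 0 + 1) * ℓ 0 := by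
        have : (ℓ 0 + 1) * (ℓ 1 + 1) ≤ (ℓ 0 + 1) * ℓ 0 := Nat.mul_le_mul_left _ hc
        nlinarith [this]
      omega
    refine ⟨ℓ 1 - ℓ 0, ℓ 0, hpar, fun k => ?_⟩
    have h1 := arith k
    have h2 : k * ℓ 1 = k * ℓ 0 + k * (ℓ 1 - ℓ 0) := by
      rw [← Nat.mul_add]
      congr 1
      omega
    omega
  · rintro ⟨d, l0, ⟨e, he⟩, hl⟩ s hs m x
    have h := extract_aux s hs x (fun i => i * (d + 1) + e) m (m * (d + 1) + e)
      (fun i hi => by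
        show i * (d + 1) + e ≤ m * (d + 1) + e
        have : i * (d + 1) ≤ m * (d + 1) := Nat.mul_le_mul_right _ hi
        omega)
    refine le_trans h (le_of_eq ?_)
    refine Finset.sum_congr rfl fun i _ => Finset.sum_congr rfl fun j _ => ?_
    simp only
    congr 1
    rw [hl (i + j), he]
    ring
end
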